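/- Let d ≥ 2 and k be integers with 1 ≤ k ≤ d+1, and let β be a real number satisfying the condition of the previous proposition (β = (k ± √(k(d+1)(d+2−k)))/(k(d+1−k)) if 2 ≤ k ≤ d; β = 1 + 2/d if k = 1; β = −(d+2)/(2(d+1)) if k = d+1). Let X be a nonempty subset of T_d(k,β). Then R_d ∪ X is a 2-distance set if and only if 𝔩(x,y) ∈ {1/β², (β+1)/β²} for all x, y ∈ X with x ≠ y. -/

import Mathlib

noncomputable section

open scoped BigOperators Classical

/-- The set of Euclidean distances between distinct points of `X`. -/
def distSet {m : ℕ} (X : Set (EuclideanSpace ℝ (Fin m))) : Set ℝ :=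
  {r | ∃ x ∈ X, ∃ y ∈ X, x ≠ y ∧ dist x y = r}

/-- `X` is a 2-distance set: exactly two distances occur between distinct points. -/
def IsTwoDistSet {m : ℕ} (X : Set (EuclideanSpace ℝ (Fin m))) : Prop :=
  (distSet X).ncard = 2

/-- The affine hyperplane `H_d = {x ∈ ℝ^{d+1} : ∑ x_i = 1}`. -/
def Hplane (d : ℕ) : Set (EuclideanSpace ℝ (Fin (d+1))) :=
  {x | ∑ i, x i = 1}

/-- The regular simplex `R_d`: the standard basis vectors of `ℝ^{d+1}`. -/
def simplex (d : ℕ) : Set (EuclideanSpace ℝ (Fin (d+1))) :=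
  Set.range (fun i => EuclideanSpace.single i (1:ℝ))

/-- The constant `c = (1 - (d+1-k)β)/(d+1)`. -/
def cval (d k : ℕ) (β : ℝ) : ℝ := (1 - ((d:ℝ) + 1 - (k:ℝ)) * β) / ((d:ℝ) + 1)

/-- The set `T_d(k,β)` of points of `H_d` all of whose coordinates lie in `{c, c+β}`,
with exactly `k` coordinates equal to `c`. -/
def Tset (d k : ℕ) (β : ℝ) : Set (EuclideanSpace ℝ (Fin (d+1))) :=
  {x | x ∈ Hplane d ∧ (∀ i, x i = cval d k β ∨ x i = cval d k β + β) ∧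
    {i | x i = cval d k β}.ncard = k}

/-- `𝔩(x,y) = |{i : x_i ≠ y_i}|/2`. -/
def lfun {m : ℕ} (x y : EuclideanSpace ℝ (Fin m)) : ℝ :=
  ({i | x i ≠ y i}.ncard : ℝ) / 2

/-- The condition of Proposition 1 on `β` (given `d` and `k`). -/
def betaCond (d k : ℕ) (β : ℝ) : Prop :=
  (k = 1 ∧ β = 1 + 2/(d:ℝ)) ∨
  (k = d + 1 ∧ β = -((d:ℝ)+2)/(2*((d:ℝ)+1))) ∨
  (2 ≤ k ∧ k ≤ d ∧
    (β = ((k:ℝ) + Real.sqrt ((k:ℝ)*((d:ℝ)+1)*((d:ℝ)+2-(k:ℝ))))/((k:ℝ)*((d:ℝ)+1-(k:ℝ))) ∨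
     β = ((k:ℝ) - Real.sqrt ((k:ℝ)*((d:ℝ)+1)*((d:ℝ)+2-(k:ℝ))))/((k:ℝ)*((d:ℝ)+1-(k:ℝ)))))

/-! ### Auxiliary lemmas -/

lemma hstar (d k : ℕ) (hd : 2 ≤ d) (β : ℝ) (hβ : betaCond d k β) :
    (k:ℝ)*((d:ℝ)+1-(k:ℝ))*β^2 - 2*(k:ℝ)*β - ((d:ℝ)+2) = 0 := by
  have hd0 : (0:ℝ) < (d:ℝ) := by exact_mod_cast Nat.pos_of_ne_zero (by omega)
  rcases hβ with ⟨hk, hb⟩ | ⟨hk, hb⟩ | ⟨hk2, hkd, hb⟩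
  · subst hk hb
    push_cast
    field_simp
    ring
  · subst hk hb
    push_cast
    field_simp
    ring
  · have hk0 : (0:ℝ) < (k:ℝ) := by exact_mod_cast Nat.pos_of_ne_zero (by omega)
    have hkd' : (k:ℝ) ≤ (d:ℝ) := by exact_mod_cast hkd
    have hden : (0:ℝ) < (k:ℝ)*((d:ℝ)+1-(k:ℝ)) := by
      apply mul_pos hk0; linarith
    have hE : (0:ℝ) ≤ (k:ℝ)*((d:ℝ)+1)*((d:ℝ)+2-(k:ℝ)) := by
      apply mul_nonneg; apply mul_nonneg <;> linarith
      linarith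
    have hne' : (d:ℝ)+1-(k:ℝ) ≠ 0 := by linarith
    set s := Real.sqrt ((k:ℝ)*((d:ℝ)+1)*((d:ℝ)+2-(k:ℝ))) with hs
    have hssq : s^2 = (k:ℝ)*((d:ℝ)+1)*((d:ℝ)+2-(k:ℝ)) := Real.sq_sqrt hE
    rcases hb with hb | hb <;>
    · rw [hb]
      field_simp
      nlinarith [hssq, hden]

lemma beta_add_one_pos (d k : ℕ) (hd : 2 ≤ d) (β : ℝ) (hβ : betaCond d k β) :
    0 < β + 1 := by
  have hd0 : (0:ℝ) < (d:ℝ) := by exact_mod_cast Nat.pos_of_ne_zero (by omega)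
  rcases hβ with ⟨hk, hb⟩ | ⟨hk, hb⟩ | ⟨hk2, hkd, hb⟩
  · subst hb; positivity
  · subst hb
    rw [div_add' _ _ _ (by positivity)]
    apply div_pos _ (by positivity)
    linarith
  · have hk0 : (0:ℝ) < (k:ℝ) := by exact_mod_cast Nat.pos_of_ne_zero (by omega)
    have hk2' : (2:ℝ) ≤ (k:ℝ) := by exact_mod_cast hk2
    have hkd' : (k:ℝ) ≤ (d:ℝ) := by exact_mod_cast hkd
    have hden : (0:ℝ) < (k:ℝ)*((d:ℝ)+1-(k:ℝ)) := by
      apply mul_pos hk0; linarith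
    have hd2 : (2:ℝ) ≤ (d:ℝ) := by exact_mod_cast hd
    have hub : Real.sqrt ((k:ℝ)*((d:ℝ)+1)*((d:ℝ)+2-(k:ℝ))) < (k:ℝ)*((d:ℝ)+2-(k:ℝ)) := by
      rw [Real.sqrt_lt' (by nlinarith)]
      nlinarith [mul_nonneg (sub_nonneg.2 hk2') (sub_nonneg.2 hkd')]
    have hsnn : 0 ≤ Real.sqrt ((k:ℝ)*((d:ℝ)+1)*((d:ℝ)+2-(k:ℝ))) := Real.sqrt_nonneg _
    rcases hb with hb | hb <;> rw [hb, div_add' _ _ _ (by positivity)] <;>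
      apply div_pos _ hden <;> nlinarith

lemma alg (m k β c : ℝ) (hm : m ≠ 0) (hc : m * c = 1 - (m-k)*β)
    (hst : k*(m-k)*β^2 - 2*k*β - (m+1) = 0) :
    k*c^2 + (m-k)*(c+β)^2 - 2*c + 1 = 2*β + 2 := by
  have hc' : c = (1 - (m-k)*β)/m := by field_simp; linarith [hc]
  subst hc'
  field_simp
  linear_combination m * hst

lemma dist_sq {m : ℕ} (x y : EuclideanSpace ℝ (Fin m)) :
    dist x y ^ 2 = ∑ i, (x i - y i)^2 := by
  rw [EuclideanSpace.dist_eq, Real.sq_sqrt (by positivity)]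
  exact Finset.sum_congr rfl fun i _ => by rw [Real.dist_eq, sq_abs]

lemma ncard_filter {m : ℕ} (p : Fin m → Prop) :
    {i | p i}.ncard = (Finset.univ.filter p).card := by
  rw [Set.ncard_eq_toFinset_card', Set.toFinset_setOf]

lemma dist_single_sq {m : ℕ} (x : EuclideanSpace ℝ (Fin m)) (j : Fin m) :
    dist (EuclideanSpace.single j (1:ℝ)) x ^ 2 = (∑ i, (x i)^2) - 2 * x j + 1 := by
  rw [dist_sq]
  have h : ∀ i ∈ Finset.univ, (EuclideanSpace.single j (1:ℝ) i - x i)^2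
      = (x i)^2 + (if i = j then 1 - 2 * x i else 0) := by
    intro i _
    rw [EuclideanSpace.single_apply]
    by_cases h : i = j <;> simp [h] <;> ring
  rw [Finset.sum_congr rfl h, Finset.sum_add_distrib, Finset.sum_ite_eq' Finset.univ j]
  simp; ring

lemma sum_sq_T (d k : ℕ) (β : ℝ) (hk2 : k ≤ d + 1) (x : EuclideanSpace ℝ (Fin (d+1)))
    (hx : x ∈ Tset d k β) :
    ∑ i, (x i)^2 = (k:ℝ) * (cval d k β)^2 + ((d:ℝ)+1-(k:ℝ)) * (cval d k β + β)^2 := by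
  obtain ⟨-, h2, h3⟩ := hx
  set c := cval d k β with hc
  have hcard : (Finset.univ.filter (fun i => x i = c)).card = k := by
    rw [← ncard_filter]; exact h3
  have hcard2 : (Finset.univ.filter (fun i => ¬ x i = c)).card = d + 1 - k := by
    have := Finset.card_filter_add_card_filter_not
      (s := (Finset.univ : Finset (Fin (d+1)))) (p := fun i => x i = c)
    simp only [Finset.card_fin] at this
    omega
  rw [← Finset.sum_filter_add_sum_filter_not Finset.univ (fun i => x i = c)]
  have e1 : ∑ i ∈ Finset.univ.filter (fun i => x i = c), (x i)^2
      = (k:ℝ) * c^2 := by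
    have : ∑ i ∈ Finset.univ.filter (fun i => x i = c), (x i)^2
        = ∑ _i ∈ Finset.univ.filter (fun i => x i = c), c^2 :=
      Finset.sum_congr rfl (fun i hi => by rw [(Finset.mem_filter.1 hi).2])
    rw [this, Finset.sum_const, hcard, nsmul_eq_mul]
  have e2 : ∑ i ∈ Finset.univ.filter (fun i => ¬ x i = c), (x i)^2
      = ((d:ℝ)+1-(k:ℝ)) * (c+β)^2 := by
    have : ∑ i ∈ Finset.univ.filter (fun i => ¬ x i = c), (x i)^2
        = ∑ _i ∈ Finset.univ.filter (fun i => ¬ x i = c), (c+β)^2 :=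
      Finset.sum_congr rfl (fun i hi => by
        rcases h2 i with h | h
        · exact absurd h (Finset.mem_filter.1 hi).2
        · rw [h])
    rw [this, Finset.sum_const, hcard2, nsmul_eq_mul]
    congr 1
    have : ((d + 1 - k : ℕ) : ℝ) = (d:ℝ) + 1 - (k:ℝ) := by
      rw [Nat.cast_sub hk2]; push_cast; ring
    exact this
  rw [e1, e2]

lemma dist_T_T (d k : ℕ) (β : ℝ) (x y : EuclideanSpace ℝ (Fin (d+1)))
    (hx : x ∈ Tset d k β) (hy : y ∈ Tset d k β) :
    dist x y ^ 2 = 2 * β^2 * lfun x y := by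
  rw [dist_sq]
  have h : ∀ i ∈ Finset.univ, (x i - y i)^2 = if x i = y i then 0 else β^2 := by
    intro i _
    by_cases h : x i = y i
    · simp [h]
    · simp only [h, if_false]
      rcases hx.2.1 i with h1 | h1 <;> rcases hy.2.1 i with h2 | h2 <;>
        rw [h1, h2] <;> first | (exact absurd (h1.trans h2.symm) h) | ring
  rw [Finset.sum_congr rfl h, Finset.sum_ite, Finset.sum_const, Finset.sum_const]
  simp only [smul_zero, zero_add, nsmul_eq_mul, lfun, ne_eq]
  rw [ncard_filter]
  have key : ∀ (s₁ s₂ : Finset (Fin (d+1))), s₁ = s₂ →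
      ((s₁.card : ℝ)) * β^2 = 2*β^2*((s₂.card:ℝ)/2) := by
    intro s₁ s₂ h; subst h; ring
  exact key _ _ (by congr)

lemma sum_sq_single {m : ℕ} (j : Fin m) :
    ∑ i, (EuclideanSpace.single j (1:ℝ) i)^2 = 1 := by
  have h : ∀ i ∈ Finset.univ, (EuclideanSpace.single j (1:ℝ) i)^2
      = if i = j then (1:ℝ) else 0 := by
    intro i _
    rw [EuclideanSpace.single_apply]
    by_cases h : i = j <;> simp [h]
  rw [Finset.sum_congr rfl h, Finset.sum_ite_eq' Finset.univ j]
  simp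

theorem stmt1 (d k : ℕ) (hd : 2 ≤ d) (hk1 : 1 ≤ k) (hk2 : k ≤ d + 1) (β : ℝ)
    (hβ : betaCond d k β) (X : Set (EuclideanSpace ℝ (Fin (d+1)))) (hX : X ⊆ Tset d k β)
    (hne : X.Nonempty) :
    IsTwoDistSet (simplex d ∪ X) ↔
      ∀ x ∈ X, ∀ y ∈ X, x ≠ y → lfun x y ∈ ({1/β^2, (β+1)/β^2} : Set ℝ) := by
  classical
  have hst := hstar d k hd β hβ
  have hb1 : 0 < β + 1 := beta_add_one_pos d k hd β hβ
  have hd0 : (0:ℝ) < (d:ℝ) := by exact_mod_cast Nat.pos_of_ne_zero (by omega)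
  have hk0 : (0:ℝ) < (k:ℝ) := by exact_mod_cast Nat.pos_of_ne_zero (by omega)
  have hk2' : (k:ℝ) ≤ (d:ℝ)+1 := by exact_mod_cast hk2
  have hbne : β ≠ 0 := by
    intro h
    rw [h] at hst
    nlinarith
  have hb2 : β^2 ≠ 0 := pow_ne_zero 2 hbne
  set c := cval d k β with hcdef
  have hm : ((d:ℝ)+1) ≠ 0 := by positivity
  have hc : ((d:ℝ)+1) * c = 1 - ((d:ℝ)+1-(k:ℝ))*β := by
    rw [hcdef, cval]; field_simp
  have halg := alg ((d:ℝ)+1) (k:ℝ) β c hm (by linarith [hc]) (by linarith [hst])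
  -- distance from a simplex vertex to a point of `Tset`
  have hsingle : ∀ x ∈ Tset d k β, ∀ j, dist (EuclideanSpace.single j (1:ℝ)) x ^ 2
      = if x j = c then 2*β+2 else 2 := by
    intro x hx j
    rw [dist_single_sq, sum_sq_T d k β hk2 x hx, ← hcdef]
    by_cases h : x j = c
    · rw [if_pos h, h]; linarith [halg]
    · rw [if_neg h]
      have hxj : x j = c + β := (hx.2.1 j).resolve_left h
      rw [hxj]; linarith [halg]
  set U := simplex d ∪ X with hU
  set A : Set ℝ := {Real.sqrt 2, Real.sqrt (2*β+2)} with hA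
  have h22 : (2:ℝ) ≠ 2*β+2 := by intro h; apply hbne; linarith
  have hAne : Real.sqrt 2 ≠ Real.sqrt (2*β+2) := by
    intro h
    rw [Real.sqrt_inj (by norm_num) (by linarith)] at h
    exact h22 h
  have hsqrt : ∀ u v : EuclideanSpace ℝ (Fin (d+1)), dist u v = Real.sqrt (dist u v ^ 2) :=
    fun u v => (Real.sqrt_sq dist_nonneg).symm
  -- distinct simplex vertices
  have hsingle_ne : ∀ i j : Fin (d+1), i ≠ j →
      EuclideanSpace.single i (1:ℝ) ≠ EuclideanSpace.single j (1:ℝ) := by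
    intro i j hij h
    have := congrArg (fun v => v i) h
    rw [EuclideanSpace.single_apply, EuclideanSpace.single_apply] at this
    simp [hij] at this
  have hsimplex_dist : ∀ i j : Fin (d+1), i ≠ j →
      dist (EuclideanSpace.single i (1:ℝ)) (EuclideanSpace.single j (1:ℝ)) = Real.sqrt 2 := by
    intro i j hij
    rw [hsqrt]
    congr 1
    rw [dist_single_sq, sum_sq_single, EuclideanSpace.single_apply, if_neg hij]
    ring
  -- A ⊆ distSet U
  have hsub : A ⊆ distSet U := by
    rw [hA]
    rintro r (rfl | rfl)
    · refine ⟨EuclideanSpace.single ⟨0, by omega⟩ (1:ℝ), Or.inl ⟨_, rfl⟩,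
        EuclideanSpace.single ⟨1, by omega⟩ (1:ℝ), Or.inl ⟨_, rfl⟩, ?_, ?_⟩
      · exact hsingle_ne _ _ (Fin.ne_of_val_ne (by norm_num))
      · exact hsimplex_dist _ _ (Fin.ne_of_val_ne (by norm_num))
    · obtain ⟨x, hxX⟩ := hne
      have hxT := hX hxX
      have hnz : {i | x i = c}.ncard ≠ 0 := by rw [hxT.2.2]; omega
      obtain ⟨j, hj⟩ := Set.nonempty_of_ncard_ne_zero hnz
      have hdj : dist (EuclideanSpace.single j (1:ℝ)) x ^ 2 = 2*β+2 := by
        rw [hsingle x hxT j, if_pos (show x j = c from hj)]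
      refine ⟨EuclideanSpace.single j (1:ℝ), Or.inl ⟨_, rfl⟩, x, Or.inr hxX, ?_, ?_⟩
      · intro h
        rw [h] at hdj
        simp at hdj
        linarith
      · rw [hsqrt, hdj]
  constructor
  · -- forward
    intro h2 x hxX y hyX hxy
    have h2' : (distSet U).ncard = 2 := h2
    have hfin : (distSet U).Finite :=
      Set.finite_of_ncard_ne_zero (by rw [h2']; norm_num)
    have hAeq : A = distSet U :=
      Set.eq_of_subset_of_ncard_le hsub (by rw [h2', hA, Set.ncard_pair hAne]) hfin
    have hdmem : dist x y ∈ A := by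
      rw [hAeq]
      exact ⟨x, Or.inr hxX, y, Or.inr hyX, hxy, rfl⟩
    rw [hA] at hdmem
    simp only [Set.mem_insert_iff, Set.mem_singleton_iff] at hdmem
    have hdsq := dist_T_T d k β x y (hX hxX) (hX hyX)
    simp only [Set.mem_insert_iff, Set.mem_singleton_iff]
    rcases hdmem with h | h
    · left
      have hs : dist x y ^ 2 = 2 := by rw [h]; exact Real.sq_sqrt (by norm_num)
      rw [hdsq] at hs
      field_simp
      linarith
    · right
      have hs : dist x y ^ 2 = 2*β+2 := by rw [h]; exact Real.sq_sqrt (by linarith)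
      rw [hdsq] at hs
      field_simp
      linarith
  · -- backward
    intro hcond
    have heq : distSet U = A := by
      apply Set.Subset.antisymm _ hsub
      rintro r ⟨u, hu, v, hv, huv, rfl⟩
      have hsingleA : ∀ x ∈ Tset d k β, ∀ j : Fin (d+1),
          dist (EuclideanSpace.single j (1:ℝ)) x ∈ A := by
        intro x hx j
        rw [hA]
        simp only [Set.mem_insert_iff, Set.mem_singleton_iff]
        rcases em (x j = c) with h | h
        · right
          rw [hsqrt, hsingle x hx j, if_pos h]
        · left
          rw [hsqrt, hsingle x hx j, if_neg h]
      rw [hA]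
      simp only [Set.mem_insert_iff, Set.mem_singleton_iff]
      rcases hu with ⟨i, rfl⟩ | huX <;> rcases hv with ⟨j, rfl⟩ | hvX
      · left
        exact hsimplex_dist i j (fun h => huv (by rw [h]))
      · have := hsingleA v (hX hvX) i
        rw [hA] at this
        simpa using this
      · have := hsingleA u (hX huX) j
        rw [hA] at this
        rw [dist_comm]
        simpa using this
      · have hdsq := dist_T_T d k β u v (hX huX) (hX hvX)
        have hcc := hcond u huX v hvX huv
        simp only [Set.mem_insert_iff, Set.mem_singleton_iff] at hcc
        rcases hcc with h | h
        · left
          rw [hsqrt]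
          congr 1
          rw [hdsq, h]
          field_simp
        · right
          rw [hsqrt]
          congr 1
          rw [hdsq, h]
          field_simp
    show (distSet U).ncard = 2
    rw [heq, hA, Set.ncard_pair hAne]
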